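/- Let p ≥ 1 be a natural number. Suppose x, y : ℝ → ℝ are differentiable functions satisfying the coupled initial value problem x'(t) = -(y(t))^(p-1) and y'(t) = (x(t))^(p-1) for all real t, with x(0) = 1 and y(0) = 0. Then for all real t, (x(t))^p + (y(t))^p = 1 (the p-Pythagorean equation). -/

import Mathlib

/-- The p-Pythagorean equation: solutions of the generalized coupled initial value
problem `x' = -y^(p-1)`, `y' = x^(p-1)`, `x 0 = 1`, `y 0 = 0` satisfy
`x(t)^p + y(t)^p = 1` for all `t`. -/
theorem p_pythagorean (p : ℕ) (hp : 1 ≤ p) (x y : ℝ → ℝ)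
    (hx : Differentiable ℝ x) (hy : Differentiable ℝ y)
    (hx' : ∀ t, deriv x t = -(y t) ^ (p - 1))
    (hy' : ∀ t, deriv y t = (x t) ^ (p - 1))
    (hx0 : x 0 = 1) (hy0 : y 0 = 0) :
    ∀ t : ℝ, (x t) ^ p + (y t) ^ p = 1 := by
  set E : ℝ → ℝ := fun t => (x t) ^ p + (y t) ^ p with hE
  have hD : ∀ t, HasDerivAt E 0 t := by
    intro t
    have h1 : HasDerivAt (fun t => (x t) ^ p)
        ((p : ℝ) * (x t) ^ (p - 1) * deriv x t) t :=
      ((hx t).hasDerivAt).pow p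
    have h2 : HasDerivAt (fun t => (y t) ^ p)
        ((p : ℝ) * (y t) ^ (p - 1) * deriv y t) t :=
      ((hy t).hasDerivAt).pow p
    have := h1.add h2
    rw [hx', hy'] at this
    exact this.congr_deriv (by ring)
  have hconst : ∀ s t : ℝ, E s = E t :=
    is_const_of_deriv_eq_zero (fun t => (hD t).differentiableAt)
      (fun t => (hD t).deriv)
  intro t
  have := hconst t 0
  simpa [E, hx0, hy0, zero_pow (by omega : p ≠ 0)] using this
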